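/- For every λ ∈ Q', there exists a unique μ ∈ Q^- such that μ + ρ ∈ P^+ and μ = v∘λ for some v ∈ W. -/

import Mathlib

open scoped Classical

noncomputable section

/-- An axiomatization of the root datum of a Kac--Moody algebra `𝔤` associated to an
`n × n` generalized Cartan matrix, realized on the lattice `V` of integral weights
(the subgroup of `𝔥*` spanned by the weight lattice `P`, the root lattice `Q` and a
Weyl vector).  `alpha i` are the simple roots, `pair i v = v(α_i^∨)` is the pairing
with the simple coroots, and `mult β = dim 𝔤_β` is the root multiplicity function.  -/
structure KacMoody (n : ℕ) (V : Type) [AddCommGroup V] where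
  /-- the simple roots `α_i` -/
  alpha : Fin n → V
  /-- the pairing with the simple coroots, `pair i v = v(α_i^∨)` -/
  pair : Fin n → V →+ ℤ
  /-- the diagonal entries of the generalized Cartan matrix `a_{ij} = pair i (alpha j)` are `2` -/
  pair_self : ∀ i, pair i (alpha i) = 2
  /-- the off-diagonal entries of the generalized Cartan matrix are nonpositive -/
  pair_offdiag : ∀ i j, i ≠ j → pair i (alpha j) ≤ 0
  /-- `a_{ij} = 0 → a_{ji} = 0` -/
  pair_zero_iff : ∀ i j, pair i (alpha j) = 0 → pair j (alpha i) = 0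
  /-- the simple roots are linearly independent -/
  indep : ∀ c : Fin n → ℤ, ∑ i, c i • alpha i = 0 → ∀ i, c i = 0
  /-- root multiplicities: `mult β = dim 𝔤_β`; `β ≠ 0` is a root iff `mult β ≠ 0` -/
  mult : V → ℕ
  /-- simple roots are roots of multiplicity one -/
  mult_simple : ∀ i, mult (alpha i) = 1
  /-- every root is positive or negative -/
  root_pm : ∀ β : V, mult β ≠ 0 → β ≠ 0 →
    (∃ c : Fin n → ℕ, β = ∑ i, c i • alpha i) ∨ (∃ c : Fin n → ℕ, β = -∑ i, c i • alpha i)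
  /-- multiplicities are invariant under the simple reflections (hence under the Weyl group) -/
  mult_reflect : ∀ (i) (v : V), mult (v - pair i v • alpha i) = mult v
  /-- a given `μ` admits only finitely many partitions into positive roots (counted
  with multiplicity); this is automatic for genuine Kac--Moody root systems -/
  part_finite : ∀ μ : V,
    {p : Finset (V × ℕ) |
      (∀ x ∈ p, (mult x.1 ≠ 0 ∧ x.1 ≠ 0 ∧ x.1 ∈ {v : V | ∃ c : Fin n → ℕ,
          v = ∑ i, c i • alpha i}) ∧ 1 ≤ x.2 ∧ x.2 ≤ mult x.1) ∧
        ∑ x ∈ p, x.1 = μ}.Finite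

/-- the group structure on additive automorphisms that older Mathlib provided
(`AddAut.group`, multiplication is composition) -/
instance addAutGroupOld (A : Type*) [Add A] : Group (AddAut A) where
  mul g h := AddEquiv.trans h g
  one := AddEquiv.refl _
  inv := AddEquiv.symm
  mul_assoc _ _ _ := rfl
  one_mul _ := rfl
  mul_one _ := rfl
  inv_mul_cancel := AddEquiv.self_trans_symm

@[simp] lemma AddAutOld.mul_apply {A : Type*} [Add A] (g h : AddAut A) (x : A) :
    (g * h) x = g (h x) := rfl

@[simp] lemma AddAutOld.one_apply {A : Type*} [Add A] (x : A) : (1 : AddAut A) x = x := rfl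

@[simp] lemma AddAutOld.inv_apply_self {A : Type*} [Add A] (g : AddAut A) (x : A) :
    g⁻¹ (g x) = x := g.symm_apply_apply x

@[simp] lemma AddAutOld.apply_inv_self {A : Type*} [Add A] (g : AddAut A) (x : A) :
    g (g⁻¹ x) = x := g.apply_symm_apply x

namespace KacMoody

variable {n : ℕ} {V : Type} [AddCommGroup V] (K : KacMoody n V)

/-- the positive root cone `Q⁺` (the `ℕ`-span of the simple roots) -/
def QP : Set V := {v | ∃ c : Fin n → ℕ, v = ∑ i, c i • K.alpha i}

/-- `β` is a positive root of `𝔤` -/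
def IsPosRoot (β : V) : Prop := K.mult β ≠ 0 ∧ β ≠ 0 ∧ β ∈ K.QP

/-- the underlying function of the simple reflection `s_i` -/
def sAux (i : Fin n) : V → V := fun v => v - K.pair i v • K.alpha i

lemma sAux_add (i : Fin n) (a b : V) : K.sAux i (a + b) = K.sAux i a + K.sAux i b := by
  simp only [sAux, map_add, add_smul]; abel

lemma sAux_invol (i : Fin n) : Function.Involutive (K.sAux i) := by
  intro v
  simp only [sAux, map_sub, map_zsmul, K.pair_self i, smul_eq_mul]
  have h2 : K.pair i v - K.pair i v * 2 = -(K.pair i v) := by ring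
  rw [h2, neg_smul, sub_neg_eq_add]
  abel

/-- the simple reflection `s_i`, as an automorphism of the weight lattice -/
def s (i : Fin n) : AddAut V :=
  { toFun := K.sAux i
    invFun := K.sAux i
    left_inv := K.sAux_invol i
    right_inv := K.sAux_invol i
    map_add' := K.sAux_add i }

/-- the Weyl group `W` of `𝔤`, realized as the subgroup of `Aut(𝔥*)` generated by the
simple reflections -/
def Wgrp : Subgroup (AddAut V) := Subgroup.closure (Set.range K.s)

/-- the length `ℓ(w)` of an element of the Weyl group: the minimal length of an
expression of `w` as a product of simple reflections -/
def len (w : AddAut V) : ℕ :=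
  sInf {k | ∃ l : List (Fin n), l.length = k ∧ (l.map K.s).prod = w}

/-- the set `P⁺` of dominant integral weights -/
def Pplus : Set V := {v | ∀ i, 0 ≤ K.pair i v}

/-- `β` is a real root: it is `W`-conjugate to a simple root -/
def IsRealRoot (β : V) : Prop := ∃ w ∈ K.Wgrp, ∃ i, w (K.alpha i) = β

/-- `β` is an imaginary root: a root that is not real -/
def IsImRoot (β : V) : Prop := K.mult β ≠ 0 ∧ β ≠ 0 ∧ ¬K.IsRealRoot β

/-- the cone `Q⁻_im` generated by the negative imaginary roots -/
def coneIm : Set V :=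
  (AddSubmonoid.closure {v : V | K.IsImRoot v ∧ -v ∈ K.QP} : AddSubmonoid V)

/-- the element of `Q⁺` with coordinates `c` in the basis of simple roots -/
def toV (c : Fin n →₀ ℕ) : V := ∑ i, c i • K.alpha i

/-- the coordinates of an element of `Q⁺` in the basis of simple roots -/
def coordOf (v : V) : Fin n →₀ ℕ :=
  if h : ∃ c : Fin n →₀ ℕ, K.toV c = v then h.choose else 0

/-- `p` is an admissible partition of `μ`: a finite subset of
`𝒫 = {(α, i) : α ∈ Φ⁺, 1 ≤ i ≤ mult α}` whose parts sum to `μ` -/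
def IsPart (μ : V) (p : Finset (V × ℕ)) : Prop :=
  (∀ x ∈ p, (K.mult x.1 ≠ 0 ∧ x.1 ≠ 0 ∧ x.1 ∈ K.QP) ∧ 1 ≤ x.2 ∧ x.2 ≤ K.mult x.1) ∧
    ∑ x ∈ p, x.1 = μ

lemma isPart_finite (μ : V) : {p : Finset (V × ℕ) | K.IsPart μ p}.Finite := K.part_finite μ

/-- the finite set `𝒫(μ)` of admissible partitions of `μ` -/
def partsFinset (μ : V) : Finset (Finset (V × ℕ)) := (K.isPart_finite μ).toFinset

/-- the Kim--Lee function `H(μ; q) = Σ_{𝔭 ∈ 𝒫(μ)} (-q)^{|𝔭|}`, i.e. the coefficient of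
`e^{-μ}` in `Π_{α ∈ Φ⁺} (1 - q e^{-α})^{mult α}` -/
def H (μ : V) : Polynomial ℤ := ∑ p ∈ K.partsFinset μ, (-Polynomial.X) ^ p.card

/-- the Weyl denominator `Π_{α ∈ Φ⁺} (1 - e^{-α})^{mult α}`, expanded as a formal sum;
the coefficient at `c` is the coefficient of `e^{-toV c}` -/
def den : MvPowerSeries (Fin n) ℤ :=
  fun c => ∑ p ∈ K.partsFinset (K.toV c), (-1 : ℤ) ^ p.card

/-- `ξ^λ = Σ_{w ∈ W} (-1)^{ℓ(w)} e^{w∘λ}` as a formal sum supported on `Q⁻`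
(for `λ ∈ Q'`); the coefficient at `c` is the coefficient of `e^{-toV c}` -/
def xiMv (ρ lam : V) : MvPowerSeries (Fin n) ℤ :=
  fun c => ∑ᶠ w ∈ {w : AddAut V | w ∈ K.Wgrp ∧ w (lam + ρ) - ρ = -K.toV c},
    (-1 : ℤ) ^ K.len w

/-- the Poincaré series `χ(q) = Σ_{w ∈ W} q^{ℓ(w)}` of the Weyl group -/
def chiPS : PowerSeries ℤ :=
  PowerSeries.mk fun k => (Nat.card {w : AddAut V | w ∈ K.Wgrp ∧ K.len w = k} : ℤ)

/-- the inversion set `Φ(w⁻¹) = {α ∈ Φ⁺ : wα < 0}` -/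
def Inversions (w : AddAut V) : Set V := {β | K.IsPosRoot β ∧ -(w β) ∈ K.QP}

/-- the number of inversions of `w`, counted with multiplicity -/
def NInv (w : AddAut V) : ℕ := ∑ᶠ β ∈ K.Inversions w, K.mult β

/-- a finite subset of `𝒫 = {(α, i) : α ∈ Φ⁺, 1 ≤ i ≤ mult α}` -/
def IsChoice (p : Finset (V × ℕ)) : Prop :=
  ∀ x ∈ p, K.IsPosRoot x.1 ∧ 1 ≤ x.2 ∧ x.2 ≤ K.mult x.1

/-- the formal sum expansion of `Δ^w`, the image of
`Δ = Π_{α ∈ Φ⁺} ((1 - q e^{-α})/(1 - e^{-α}))^{mult α}` under `w ∈ W`: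
`Δ^w = Π_{α ∈ Φ(w⁻¹)} ((q - e^{-α})/(1 - e^{-α})) ·
Π_{α ∈ Φ⁺ ∖ Φ(w⁻¹)} ((1 - q e^{-α})/(1 - e^{-α}))^{mult α}`, where numerators are
expanded by choosing a finite subset `pf.1` of `𝒫` and denominators by choosing a
finitely supported multiset `pf.2` on `𝒫`. -/
def deltaW (w : AddAut V) : MvPowerSeries (Fin n) (PowerSeries ℤ) :=
  fun c =>
    ∑ᶠ pf ∈ {pf : Finset (V × ℕ) × ((V × ℕ) →₀ ℕ) |
        K.IsChoice pf.1 ∧ (∀ x ∈ pf.2.support, K.IsPosRoot x.1 ∧ 1 ≤ x.2 ∧ x.2 ≤ K.mult x.1) ∧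
        (∑ x ∈ pf.1, x.1) + (pf.2.sum fun x k => k • x.1) = K.toV c},
      ((-1 : ℤ) ^ pf.1.card) •
        (PowerSeries.X : PowerSeries ℤ) ^
          (K.NInv w + (pf.1.filter fun x => x.1 ∉ K.Inversions w).card
            - (pf.1.filter fun x => x.1 ∈ K.Inversions w).card)

/-- the formal sum `ℳ(q) = Σ_{w ∈ W} Δ^w`, a formal sum supported on `Q⁻` with
coefficients in `ℤ[[q]]`; the coefficient at `c` is the coefficient of `e^{-toV c}` -/
def Mcal : MvPowerSeries (Fin n) (PowerSeries ℤ) :=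
  fun c => PowerSeries.mk fun m =>
    ∑ᶠ w ∈ {w : AddAut V | w ∈ K.Wgrp},
      PowerSeries.coeff m (MvPowerSeries.coeff c (K.deltaW w))

/-- `Q' = ⋂_{w ∈ W} w ∘ Q⁻`, where `∘` is the circle (dot) action `w ∘ λ = w(λ+ρ) - ρ` -/
def Qprime (ρ : V) : Set V := {v | ∀ w ∈ K.Wgrp, -(w (v + ρ) - ρ) ∈ K.QP}

/-- `ξ^λ = Σ_{w ∈ W} (-1)^{ℓ(w)} e^{w∘λ}` as a formal sum on all of `𝔥*`:
`xiFun ρ lam v` is the coefficient of `e^v` -/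
def xiFun (ρ lam : V) : V → ℤ :=
  fun v => ∑ᶠ w ∈ {w : AddAut V | w ∈ K.Wgrp ∧ w (lam + ρ) - ρ = v}, (-1 : ℤ) ^ K.len w

/-- the numerator `Σ_{w ∈ W} (-1)^{ℓ(w)} e^{w(λ+ρ)}` of `π^λ`, as a formal sum:
`numFun ρ lam v` is the coefficient of `e^v` -/
def numFun (ρ lam : V) : V → ℤ :=
  fun v => ∑ᶠ w ∈ {w : AddAut V | w ∈ K.Wgrp ∧ w (lam + ρ) = v}, (-1 : ℤ) ^ K.len w

/-- the map `φ_i : 𝒫(-λ) → 𝒫(-s_i ∘ λ)` on admissible partitions -/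
def phi (i : Fin n) (p : Finset (V × ℕ)) : Finset (V × ℕ) :=
  if ∃ x ∈ p, x.1 = K.alpha i then
    (p.filter fun x => x.1 ≠ K.alpha i).image fun x => (K.s i x.1, x.2)
  else insert (K.alpha i, 1) (p.image fun x => (K.s i x.1, x.2))

/-- `m(𝔭, w) = |𝔭| - 2 ⬝ #{(β, j) ∈ 𝔭 : wβ < 0}` -/
def mpw (w : AddAut V) (p : Finset (V × ℕ)) : ℤ :=
  (p.card : ℤ) - 2 * (p.filter fun x => -(w x.1) ∈ K.QP ∧ w x.1 ≠ 0).card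

/-- `|wβ|`: the positive root among `± wβ` -/
def wabs (w : AddAut V) (β : V) : V := if -(w β) ∈ K.QP then -(w β) else w β

/-- `Σ_{α ∈ Φ(w⁻¹)} mult α • (-wα)`, the forced monomial appearing when `w` acts on the
Weyl denominator -/
def invWt (w : AddAut V) : V := ∑ᶠ β ∈ K.Inversions w, K.mult β • (-(w β))

/-- the series part of the expansion of `w(Π_{α ∈ Φ⁺} (1 - e^{-α})^{mult α})`:
by the defining action `w(1 - e^{-α}) = 1 - e^{-wα}` if `wα > 0` and
`w(1 - e^{-α}) = (-e^{-wα})(1 - e^{wα})` if `wα < 0`, one has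
`w(Π_{α ∈ Φ⁺} (1 - e^{-α})^{mult α}) = (-1)^{NInv w} e^{invWt w} · wDen w`, where
`wDen w = Π_{α ∈ Φ⁺, (α,i) ∈ 𝒫} (1 - e^{-|wα|})`; the coefficient at `c` is the
coefficient of `e^{-toV c}` -/
def wDen (w : AddAut V) : MvPowerSeries (Fin n) ℤ :=
  fun c => ∑ᶠ p ∈ {p : Finset (V × ℕ) | K.IsChoice p ∧
      (∑ x ∈ p, K.wabs w x.1) = K.toV c},
    (-1 : ℤ) ^ p.card

/-- for a word `l = (i_1, …, i_ℓ)`, the root `s_{i_1} ⋯ s_{i_{k-1}} (α_{i_k})` -/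
def prefixRoot (l : List (Fin n)) (k : Fin l.length) : V :=
  ((l.take k).map K.s).prod (K.alpha (l.get k))

end KacMoody

namespace KacMoody

variable {n : ℕ} {V : Type} [AddCommGroup V] (K : KacMoody n V)

/-- integer combinations of the simple roots -/
def zsum (z : Fin n → ℤ) : V := ∑ i, z i • K.alpha i

lemma zsum_add (z w : Fin n → ℤ) : K.zsum (z + w) = K.zsum z + K.zsum w := by
  simp [zsum, add_smul, Finset.sum_add_distrib]

lemma zsum_inj {z w : Fin n → ℤ} (h : K.zsum z = K.zsum w) : z = w := by
  funext k
  have h0 : K.zsum (z - w) = 0 := by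
    simp only [zsum, Pi.sub_apply, sub_smul, Finset.sum_sub_distrib] at *
    rw [h, sub_self]
  have := K.indep (z - w) h0 k
  simpa [sub_eq_zero] using this

lemma mem_QP_iff {v : V} :
    v ∈ K.QP ↔ ∃ z : Fin n → ℤ, (∀ k, 0 ≤ z k) ∧ v = K.zsum z := by
  constructor
  · rintro ⟨c, rfl⟩
    exact ⟨fun k => (c k : ℤ), fun k => Int.ofNat_nonneg _, by
      simp [zsum, natCast_zsmul]⟩
  · rintro ⟨z, hz, rfl⟩
    refine ⟨fun k => (z k).toNat, ?_⟩
    simp only [zsum]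
    refine Finset.sum_congr rfl fun k _ => ?_
    rw [← natCast_zsmul, Int.toNat_of_nonneg (hz k)]

lemma zsum_mem_QP {z : Fin n → ℤ} (hz : ∀ k, 0 ≤ z k) : K.zsum z ∈ K.QP :=
  K.mem_QP_iff.mpr ⟨z, hz, rfl⟩

lemma coords_nonneg {z : Fin n → ℤ} (h : K.zsum z ∈ K.QP) : ∀ k, 0 ≤ z k := by
  obtain ⟨z', hz', hzz⟩ := K.mem_QP_iff.mp h
  intro k
  rw [K.zsum_inj hzz]; exact hz' k

lemma QP_zero : (0 : V) ∈ K.QP := ⟨0, by simp⟩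

lemma QP_add {v w : V} (hv : v ∈ K.QP) (hw : w ∈ K.QP) : v + w ∈ K.QP := by
  obtain ⟨z, hz, rfl⟩ := K.mem_QP_iff.mp hv
  obtain ⟨y, hy, rfl⟩ := K.mem_QP_iff.mp hw
  rw [← K.zsum_add]
  exact K.zsum_mem_QP fun k => add_nonneg (hz k) (hy k)

lemma QP_zsmul {v : V} (hv : v ∈ K.QP) {m : ℤ} (hm : 0 ≤ m) : m • v ∈ K.QP := by
  obtain ⟨z, hz, rfl⟩ := K.mem_QP_iff.mp hv
  have : m • K.zsum z = K.zsum (fun k => m * z k) := by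
    simp [zsum, Finset.smul_sum, mul_smul]
  rw [this]
  exact K.zsum_mem_QP fun k => mul_nonneg hm (hz k)

lemma QP_antisymm {v : V} (h1 : v ∈ K.QP) (h2 : -v ∈ K.QP) : v = 0 := by
  obtain ⟨z, hz, rfl⟩ := K.mem_QP_iff.mp h1
  obtain ⟨y, hy, hyz⟩ := K.mem_QP_iff.mp h2
  have h0 : K.zsum (z + y) = 0 := by
    rw [K.zsum_add, ← hyz]; abel
  have hz0 : ∀ k, z k = 0 := fun k => by
    have h3 : z k + y k = 0 := by simpa using K.indep (z + y) h0 k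
    have := hz k; have := hy k; omega
  have : z = 0 := funext hz0
  simp [this, zsum]

lemma zsum_single (k : Fin n) (m : ℤ) :
    K.zsum (fun l => if l = k then m else 0) = m • K.alpha k := by
  simp [zsum]

lemma alpha_ne_zero (i : Fin n) : K.alpha i ≠ 0 := by
  intro h
  have h0 : K.zsum (fun l => if l = i then 1 else 0) = 0 := by
    rw [K.zsum_single]; simp [h]
  have := K.indep _ h0 i
  simp at this

lemma alpha_mem_QP (i : Fin n) : K.alpha i ∈ K.QP := by
  have := K.zsum_mem_QP (z := fun l => if l = i then 1 else 0)
    (fun k => by by_cases h : k = i <;> simp [h])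
  rwa [K.zsum_single, one_smul] at this

lemma neg_alpha_not_mem_QP (i : Fin n) : -K.alpha i ∉ K.QP := by
  intro h
  exact K.alpha_ne_zero i (K.QP_antisymm (K.alpha_mem_QP i) h)

lemma s_apply (i : Fin n) (x : V) : K.s i x = x - K.pair i x • K.alpha i := rfl

lemma s_alpha_self (i : Fin n) : K.s i (K.alpha i) = -K.alpha i := by
  rw [s_apply, K.pair_self]
  have : (2 : ℤ) • K.alpha i = K.alpha i + K.alpha i := two_zsmul _
  rw [this]; abel

lemma s_mul_self (i : Fin n) : K.s i * K.s i = 1 := by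
  ext x
  exact K.sAux_invol i x

lemma s_inv (i : Fin n) : (K.s i)⁻¹ = K.s i :=
  inv_eq_of_mul_eq_one_left (K.s_mul_self i)

lemma s_mem (i : Fin n) : K.s i ∈ K.Wgrp :=
  Subgroup.subset_closure ⟨i, rfl⟩

/-- the product of the simple reflections along a word -/
def piW (l : List (Fin n)) : AddAut V := (l.map K.s).prod

lemma piW_nil : K.piW [] = 1 := rfl

lemma piW_cons (j : Fin n) (l : List (Fin n)) : K.piW (j :: l) = K.s j * K.piW l := by
  simp [piW]

lemma piW_append (l₁ l₂ : List (Fin n)) : K.piW (l₁ ++ l₂) = K.piW l₁ * K.piW l₂ := by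
  simp [piW]

lemma piW_mem (l : List (Fin n)) : K.piW l ∈ K.Wgrp := by
  refine Subgroup.list_prod_mem _ fun x hx => ?_
  obtain ⟨i, _, rfl⟩ := List.mem_map.mp hx
  exact K.s_mem i

lemma piW_reverse (l : List (Fin n)) : K.piW l.reverse = (K.piW l)⁻¹ := by
  induction l with
  | nil => simp [piW]
  | cons j l ih =>
    rw [List.reverse_cons, K.piW_append, ih,
      show K.piW (j :: l) = K.s j * K.piW l from K.piW_cons j l, mul_inv_rev, K.s_inv]
    simp [piW]

lemma exists_word {w : AddAut V} (hw : w ∈ K.Wgrp) : ∃ l : List (Fin n), K.piW l = w := by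
  induction hw using Subgroup.closure_induction with
  | mem x hx =>
    obtain ⟨i, rfl⟩ := hx
    exact ⟨[i], by simp [piW]⟩
  | one => exact ⟨[], rfl⟩
  | mul x y _ _ hx hy =>
    obtain ⟨l₁, rfl⟩ := hx; obtain ⟨l₂, rfl⟩ := hy
    exact ⟨l₁ ++ l₂, K.piW_append l₁ l₂⟩
  | inv x _ hx =>
    obtain ⟨l, rfl⟩ := hx
    exact ⟨l.reverse, K.piW_reverse l⟩

lemma mult_w {w : AddAut V} (hw : w ∈ K.Wgrp) : ∀ x : V, K.mult (w x) = K.mult x := by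
  induction hw using Subgroup.closure_induction with
  | mem x hx =>
    obtain ⟨i, rfl⟩ := hx
    intro v
    rw [K.s_apply]
    exact K.mult_reflect i v
  | one => intro v; simp
  | mul x y _ _ hx hy =>
    intro v
    rw [AddAutOld.mul_apply, hx, hy]
  | inv x _ hx =>
    intro v
    conv_rhs => rw [show v = x (x⁻¹ v) by simp]
    rw [hx]

lemma root_dichotomy {w : AddAut V} (hw : w ∈ K.Wgrp) (i : Fin n) :
    w (K.alpha i) ∈ K.QP ∨ -(w (K.alpha i)) ∈ K.QP := by
  have hm : K.mult (w (K.alpha i)) ≠ 0 := by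
    rw [K.mult_w hw, K.mult_simple]; omega
  have hne : w (K.alpha i) ≠ 0 := by
    intro h
    have : K.alpha i = 0 := by
      have := congrArg w.symm h
      simpa using this
    exact K.alpha_ne_zero i this
  rcases K.root_pm _ hm hne with ⟨c, hc⟩ | ⟨c, hc⟩
  · exact Or.inl ⟨c, hc⟩
  · right
    refine ⟨c, ?_⟩
    rw [hc, neg_neg]


/-- the root lattice `Q`, as a subgroup of `V` -/
def QS : AddSubgroup V := AddSubgroup.closure (Set.range K.alpha)

lemma alpha_mem_QS (i : Fin n) : K.alpha i ∈ K.QS :=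
  AddSubgroup.subset_closure ⟨i, rfl⟩

lemma zsum_mem_QS (z : Fin n → ℤ) : K.zsum z ∈ K.QS :=
  sum_mem fun i _ => zsmul_mem (K.alpha_mem_QS i) _

lemma zsum_neg (z : Fin n → ℤ) : K.zsum (-z) = -K.zsum z := by
  simp [zsum, Finset.sum_neg_distrib]

lemma s_sub_mem (i : Fin n) {ν x : V} (h : x - ν ∈ K.QS) : K.s i x - ν ∈ K.QS := by
  rw [K.s_apply]
  have : x - K.pair i x • K.alpha i - ν = (x - ν) - K.pair i x • K.alpha i := by abel
  rw [this]
  exact sub_mem h (zsmul_mem (K.alpha_mem_QS i) _)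

lemma w_sub_mem {w : AddAut V} (hw : w ∈ K.Wgrp) {ν x : V} (h : x - ν ∈ K.QS) :
    w x - ν ∈ K.QS := by
  have main : ∀ w' : AddAut V, w' ∈ K.Wgrp →
      (∀ y : V, y - ν ∈ K.QS → w' y - ν ∈ K.QS) ∧
      (∀ y : V, y - ν ∈ K.QS → w'⁻¹ y - ν ∈ K.QS) := by
    intro w' hw'
    induction hw' using Subgroup.closure_induction with
    | mem x hx =>
      obtain ⟨i, rfl⟩ := hx
      rw [K.s_inv]
      exact ⟨fun y hy => K.s_sub_mem i hy, fun y hy => K.s_sub_mem i hy⟩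
    | one => simp
    | mul a b _ _ ha hb =>
      refine ⟨fun y hy => ?_, fun y hy => ?_⟩
      · rw [AddAutOld.mul_apply]; exact ha.1 _ (hb.1 _ hy)
      · rw [mul_inv_rev, AddAutOld.mul_apply]; exact hb.2 _ (ha.2 _ hy)
    | inv a _ ha =>
      refine ⟨ha.2, ?_⟩
      rw [inv_inv]; exact ha.1
  exact (main w hw).1 _ h

lemma Qprime_mem {ρ lam : V} (hlam : lam ∈ K.Qprime ρ) {w : AddAut V} (hw : w ∈ K.Wgrp) :
    -(w (lam + ρ) - ρ) ∈ K.QP := hlam w hw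

/-- **Key conjugation lemma**: if `u α_i = c α_j` then `s_j ∘ u = u ∘ s_i` on the
affine lattice `λ + ρ + Q`. -/
lemma conj_lemma {ρ lam : V} (hlam : lam ∈ K.Qprime ρ) {u : AddAut V} (hu : u ∈ K.Wgrp)
    (i j : Fin n) (c : ℕ) (hc : u (K.alpha i) = c • K.alpha j) :
    ∀ x : V, x - (lam + ρ) ∈ K.QS → K.s j (u x) = u (K.s i x) := by
  classical
  set d : V → ℤ := fun x => K.pair j x - c * K.pair i (u⁻¹ x) with hd
  have d_add : ∀ x y, d (x + y) = d x + d y := by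
    intro x y; simp only [hd, map_add]; ring
  have d_neg : ∀ x, d (-x) = -d x := by
    intro x; simp only [hd, map_neg]; ring
  have d_zsmul : ∀ (m : ℤ) (x), d (m • x) = m * d x := by
    intro m x; simp only [hd, map_zsmul, smul_eq_mul]; ring
  have d_sub_smul : ∀ (x : V) (e : ℤ), d (x - e • K.alpha j) = d x - e * d (K.alpha j) := by
    intro x e
    have : x - e • K.alpha j = x + (-e) • K.alpha j := by rw [neg_smul]; abel
    rw [this, d_add, d_zsmul]; ring
  have d_alpha_j : d (K.alpha j) = 0 := by
    have h1 : u⁻¹ ((c : ℕ) • K.alpha j) = K.alpha i := by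
      rw [← hc]; simp
    have h2 : (c : ℤ) * K.pair i (u⁻¹ (K.alpha j)) = 2 := by
      have : K.pair i (u⁻¹ ((c : ℕ) • K.alpha j)) = 2 := by rw [h1, K.pair_self]
      rw [map_nsmul, map_nsmul, nsmul_eq_mul] at this
      push_cast at this ⊢
      linarith
    simp only [hd, K.pair_self]
    omega
  set T : AddAut V := K.s j * u * K.s i * u⁻¹ with hT
  have hTW : T ∈ K.Wgrp :=
    mul_mem (mul_mem (mul_mem (K.s_mem j) hu) (K.s_mem i)) (inv_mem hu)
  have T_apply : ∀ x : V, T x = x - d x • K.alpha j := by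
    intro x
    have e1 : T x = K.s j (u (K.s i (u⁻¹ x))) := by
      simp only [hT, AddAutOld.mul_apply]
    have e2 : u (K.s i (u⁻¹ x)) = x - ((K.pair i (u⁻¹ x)) * c) • K.alpha j := by
      rw [K.s_apply, map_sub, map_zsmul]
      have : u (u⁻¹ x) = x := by simp
      rw [this, hc, ← natCast_zsmul, smul_smul]
    rw [e1, e2, K.s_apply, map_sub, map_zsmul, K.pair_self, smul_eq_mul]
    have harr : ∀ A B : ℤ, x - A • K.alpha j - (B - A * 2) • K.alpha j
        = x - (B - A) • K.alpha j := by
      intro A B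
      have : (B - A) = A + (B - A * 2) := by ring
      rw [this, add_smul]; abel
    rw [harr]
    congr 1
    simp only [hd]
    ring
  have Tpow : ∀ (m : ℕ) (x : V), (T ^ m) x = x - (m * d x) • K.alpha j := by
    intro m
    induction m with
    | zero => intro x; simp
    | succ m ih =>
      intro x
      rw [pow_succ, AddAutOld.mul_apply, T_apply, ih, d_sub_smul, d_alpha_j]
      have : ((m : ℤ) + 1) * d x = m * (d x - d x * 0) + d x := by ring
      push_cast
      rw [this, add_smul]
      abel
  have Tinv_apply : ∀ x : V, T⁻¹ x = x + d x • K.alpha j := by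
    intro x
    have : T (x + d x • K.alpha j) = x := by
      rw [T_apply, d_add, d_zsmul, d_alpha_j]
      simp
    calc T⁻¹ x = T⁻¹ (T (x + d x • K.alpha j)) := by rw [this]
    _ = x + d x • K.alpha j := by simp
  have Tinvpow : ∀ (m : ℕ) (x : V), (T⁻¹ ^ m) x = x + (m * d x) • K.alpha j := by
    intro m
    induction m with
    | zero => intro x; simp
    | succ m ih =>
      intro x
      have d_add_smul : ∀ (y : V) (e : ℤ), d (y + e • K.alpha j) = d y := by
        intro y e; rw [d_add, d_zsmul, d_alpha_j]; ring
      rw [pow_succ, AddAutOld.mul_apply, Tinv_apply, ih, d_add_smul]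
      push_cast
      rw [show ((m : ℤ) + 1) * d x = m * d x + d x by ring, add_smul]
      abel
  -- `d` vanishes on all simple roots
  have d_alpha : ∀ k : Fin n, d (K.alpha k) = 0 := by
    intro k
    by_cases hkj : k = j
    · rw [hkj]; exact d_alpha_j
    set e := d (K.alpha k) with he
    have hsum : ∀ e' : ℤ, K.alpha k - e' • K.alpha j
        = K.zsum ((fun l => if l = k then (1:ℤ) else 0) + (fun l => if l = j then -e' else 0)) := by
      intro e'
      rw [K.zsum_add, K.zsum_single, K.zsum_single, one_smul, neg_smul]
      abel
    have case1 : ∀ e' : ℤ, K.alpha k - e' • K.alpha j ∈ K.QP → 0 ≤ -e' := by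
      intro e' hmem
      rw [hsum e'] at hmem
      have := K.coords_nonneg hmem j
      simpa [hkj, Ne.symm hkj, fun h => hkj h] using this
    have case2 : ∀ e' : ℤ, -(K.alpha k - e' • K.alpha j) ∈ K.QP → False := by
      intro e' hmem
      rw [hsum e', ← K.zsum_neg] at hmem
      have := K.coords_nonneg hmem k
      simp [hkj] at this
    have h1 : T (K.alpha k) = K.alpha k - e • K.alpha j := by
      rw [T_apply, he]
    have h2 : T⁻¹ (K.alpha k) = K.alpha k - (-e) • K.alpha j := by
      rw [Tinv_apply, he, neg_smul]; abel
    have hd1 : 0 ≤ -e := by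
      rcases K.root_dichotomy hTW k with hp | hp
      · exact case1 e (by rwa [h1] at hp)
      · exact absurd (by rwa [h1] at hp) fun hh => case2 e hh
    have hd2 : 0 ≤ e := by
      rcases K.root_dichotomy (inv_mem hTW) k with hp | hp
      · have := case1 (-e) (by rwa [h2] at hp)
        omega
      · exact absurd (by rwa [h2] at hp) fun hh => case2 (-e) hh
    omega
  -- `d` vanishes on the root lattice
  have d_QS : ∀ q ∈ K.QS, d q = 0 := by
    intro q hq
    induction hq using AddSubgroup.closure_induction with
    | mem x hx => obtain ⟨k, rfl⟩ := hx; exact d_alpha k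
    | zero => simp only [hd]; simp
    | add a b _ _ ha hb => rw [d_add, ha, hb]; ring
    | neg a _ ha => rw [d_neg, ha]; ring
  -- `d` vanishes on `λ + ρ`
  have d_nu : d (lam + ρ) = 0 := by
    set e := d (lam + ρ) with he
    have hlam0 : -lam ∈ K.QP := by
      have := K.Qprime_mem hlam (one_mem K.Wgrp)
      simpa using this
    obtain ⟨a, ha, haa⟩ := K.mem_QP_iff.mp hlam0
    have key : ∀ (w' : AddAut V), w' ∈ K.Wgrp → ∀ e' : ℤ,
        w' (lam + ρ) = lam + ρ - e' • K.alpha j → 0 ≤ a j + e' := by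
      intro w' hw' e' hww
      have hmem := K.Qprime_mem hlam hw'
      rw [hww] at hmem
      have : -(lam + ρ - e' • K.alpha j - ρ) = K.zsum (a + fun l => if l = j then e' else 0) := by
        rw [K.zsum_add, K.zsum_single, ← haa]
        abel
      rw [this] at hmem
      have := K.coords_nonneg hmem j
      simp at this
      omega
    have hge : ∀ m : ℕ, 0 ≤ a j + m * e := by
      intro m
      exact key (T ^ m) (pow_mem hTW m) (m * e) (by rw [Tpow, he])
    have hle : ∀ m : ℕ, 0 ≤ a j + -(m * e) := by
      intro m
      refine key (T⁻¹ ^ m) (pow_mem (inv_mem hTW) m) (-(m * e)) ?_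
      rw [Tinvpow, he, neg_smul]
      abel
    have h1 := hge ((a j).toNat + 1)
    have h2 := hle ((a j).toNat + 1)
    have h3 : ((a j).toNat : ℤ) = a j := Int.toNat_of_nonneg (ha j)
    push_cast at h1 h2
    rw [h3] at h1 h2
    nlinarith [ha j]
  -- conclude
  intro x hx
  have hdx : d x = 0 := by
    have h1 : d (x - (lam + ρ)) = 0 := d_QS _ hx
    have : x = (lam + ρ) + (x - (lam + ρ)) := by abel
    rw [this, d_add, d_nu, h1]
    ring
  set y := u (K.s i x) with hy
  have hyX : y - (lam + ρ) ∈ K.QS := K.w_sub_mem hu (K.s_sub_mem i hx)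
  have hdy : d y = 0 := by
    have h1 : d (y - (lam + ρ)) = 0 := d_QS _ hyX
    have : y = (lam + ρ) + (y - (lam + ρ)) := by abel
    rw [this, d_add, d_nu, h1]
    ring
  have hTy : T y = y := by rw [T_apply, hdy]; simp
  have hTy2 : T y = K.s j (u x) := by
    simp only [hT, AddAutOld.mul_apply, hy]
    have h1 : u⁻¹ (u (K.s i x)) = K.s i x := by simp
    rw [h1]
    have h2 : K.s i (K.s i x) = x := K.sAux_invol i x
    rw [h2]
  rw [← hTy2, hTy]

/-- **Strong exchange on the affine lattice**: if `π(l) α_i < 0` then `π(l) ∘ s_i`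
agrees on `λ + ρ + Q` with the product over a word shorter by one. -/
lemma strong_exchange {ρ lam : V} (hlam : lam ∈ K.Qprime ρ) :
    ∀ (l : List (Fin n)) (i : Fin n), -(K.piW l (K.alpha i)) ∈ K.QP →
    ∃ dl : List (Fin n), dl.length + 1 = l.length ∧
      ∀ x : V, x - (lam + ρ) ∈ K.QS → K.piW l (K.s i x) = K.piW dl x := by
  intro l
  induction l with
  | nil =>
    intro i h
    exfalso
    have h1 : K.piW [] (K.alpha i) = K.alpha i := by rw [K.piW_nil]; rfl
    rw [h1] at h
    exact K.neg_alpha_not_mem_QP i h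
  | cons j l ih =>
    intro i h
    have hcons : ∀ y : V, K.piW (j :: l) y = K.s j (K.piW l y) := by
      intro y; rw [K.piW_cons, AddAutOld.mul_apply]
    rw [hcons] at h
    rcases K.root_dichotomy (K.piW_mem l) i with hb | hb
    · -- `π(l) α_i` is a positive root, hence a multiple of `α_j`
      obtain ⟨cc, hcc⟩ := hb
      set β := K.piW l (K.alpha i) with hβdef
      have hβ : β = K.zsum (fun k => (cc k : ℤ)) := by
        rw [hcc]
        simp [zsum, natCast_zsmul]
      have hs : -(K.s j β) =
          K.zsum ((fun k => -(cc k : ℤ)) + fun k => if k = j then K.pair j β else 0) := by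
        rw [K.s_apply, K.zsum_add, K.zsum_single]
        have : K.zsum (fun k => -(cc k : ℤ)) = -β := by
          rw [show (fun k => -(cc k : ℤ)) = -(fun k => (cc k : ℤ)) from rfl, K.zsum_neg, ← hβ]
        rw [this]
        abel
      obtain ⟨z, hz, hzz⟩ := K.mem_QP_iff.mp h
      have hzeq : z = (fun k => -(cc k : ℤ)) + fun k => if k = j then K.pair j β else 0 :=
        K.zsum_inj (hzz.symm.trans hs)
      have hbk : ∀ k, k ≠ j → cc k = 0 := by
        intro k hk
        have h1 := congrFun hzeq k
        have h2 := hz k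
        simp only [Pi.add_apply, if_neg hk] at h1
        omega
      have hkey : β = cc j • K.alpha j := by
        rw [hcc, Finset.sum_eq_single j (fun k _ hk => by rw [hbk k hk]; simp)
          (fun hj => absurd (Finset.mem_univ j) hj)]
      have hconj := K.conj_lemma hlam (K.piW_mem l) i j (cc j) hkey
      refine ⟨l, by simp, fun x hx => ?_⟩
      rw [hcons]
      have hsx : K.s i x - (lam + ρ) ∈ K.QS := K.s_sub_mem i hx
      rw [hconj (K.s i x) hsx]
      congr 1
      exact K.sAux_invol i x
    · obtain ⟨dl, hlen, hp⟩ := ih i hb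
      refine ⟨j :: dl, by simp [← hlen], fun x hx => ?_⟩
      rw [hcons, hp x hx, K.piW_cons, AddAutOld.mul_apply]

/-- **Dominance comparison**: if `x` lies in `λ + ρ + Q` and is dominant, then
`x - w x ∈ Q⁺` for every `w ∈ W`. -/
lemma dominant_diff {ρ lam : V} (hlam : lam ∈ K.Qprime ρ) :
    ∀ (k : ℕ) (l : List (Fin n)), l.length ≤ k →
      ∀ x : V, x - (lam + ρ) ∈ K.QS → (∀ i, 0 ≤ K.pair i x) →
      x - K.piW l x ∈ K.QP := by
  intro k
  induction k with
  | zero =>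
    intro l hl x hx hdom
    have hnil : l = [] := List.length_eq_zero_iff.mp (Nat.le_zero.mp hl)
    subst hnil
    have : K.piW [] x = x := rfl
    rw [this, sub_self]
    exact K.QP_zero
  | succ k ih =>
    intro l hl x hx hdom
    rcases List.eq_nil_or_concat l with rfl | ⟨l', i, rfl⟩
    · have : K.piW [] x = x := rfl
      rw [this, sub_self]
      exact K.QP_zero
    · rw [List.concat_eq_append] at hl ⊢
      have hlen' : l'.length + 1 = (l' ++ [i]).length := by simp
      have hsplit : ∀ y : V, K.piW (l' ++ [i]) y = K.piW l' (K.s i y) := by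
        intro y
        rw [K.piW_append, AddAutOld.mul_apply]
        congr 1
      set w := K.piW (l' ++ [i]) with hwdef
      rcases K.root_dichotomy (K.piW_mem (l' ++ [i])) i with hb | hb
      · -- `w α_i > 0` : delete inside `l'`
        have hli : K.piW l' (K.alpha i) = -(w (K.alpha i)) := by
          have h1 : w (K.alpha i) = K.piW l' (K.s i (K.alpha i)) := hsplit _
          rw [h1, K.s_alpha_self, map_neg, neg_neg]
        have hneg : -(K.piW l' (K.alpha i)) ∈ K.QP := by
          rw [hli, neg_neg]; exact hb
        obtain ⟨dl, hlen, hp⟩ := K.strong_exchange hlam l' i hneg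
        have heq : w x = K.piW dl x := by
          rw [hsplit x, hp x hx]
        rw [heq]
        refine ih dl ?_ x hx hdom
        have := hl
        simp only [List.length_append, List.length_cons, List.length_nil] at this
        omega
      · -- `w α_i < 0` : delete inside `l`
        obtain ⟨dl, hlen, hp⟩ := K.strong_exchange hlam (l' ++ [i]) i hb
        have hx2 : K.s i x - (lam + ρ) ∈ K.QS := K.s_sub_mem i hx
        have e1 : w x = K.piW dl (K.s i x) := by
          have hxx : x = K.s i (K.s i x) := (K.sAux_invol i x).symm
          conv_lhs => rw [hxx]
          exact hp (K.s i x) hx2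
        have e2 : K.piW dl (K.s i x) = K.piW dl x - K.pair i x • K.piW dl (K.alpha i) := by
          rw [K.s_apply, map_sub, map_zsmul]
        have e3 : K.piW dl (K.alpha i) = -(w (K.alpha i)) := by
          have hxa : (x + K.alpha i) - (lam + ρ) ∈ K.QS := by
            have : (x + K.alpha i) - (lam + ρ) = (x - (lam + ρ)) + K.alpha i := by abel
            rw [this]
            exact add_mem hx (K.alpha_mem_QS i)
          have h4 : K.piW dl (x + K.alpha i) = K.piW dl x + K.piW dl (K.alpha i) :=
            map_add _ _ _
          have h5 : K.piW dl (x + K.alpha i) = K.piW dl x - w (K.alpha i) := by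
            rw [← hp (x + K.alpha i) hxa, ← hp x hx]
            have h6 : K.s i (x + K.alpha i) = K.s i x - K.alpha i := by
              rw [map_add, K.s_alpha_self]
              abel
            rw [h6, map_sub]
          rw [h4] at h5
          have h7 : K.piW dl x + K.piW dl (K.alpha i)
              = K.piW dl x + -(w (K.alpha i)) := by rw [h5]; abel
          exact add_left_cancel h7
        have final : x - w x = (x - K.piW dl x) + K.pair i x • (-(w (K.alpha i))) := by
          rw [e1, e2, e3]
          abel
        rw [final]
        refine K.QP_add (ih dl ?_ x hx hdom) (K.QP_zsmul hb (hdom i))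
        have h8 := hl
        simp only [List.length_append, List.length_cons, List.length_nil] at h8 hlen
        omega

/-- **Existence of a dominant representative** for the circle orbit of `λ ∈ Q'`. -/
lemma exists_dominant {ρ lam : V} (hlam : lam ∈ K.Qprime ρ) :
    ∃ v ∈ K.Wgrp, ∀ i, 0 ≤ K.pair i (v (lam + ρ)) := by
  have key : ∀ (M : ℕ) (w : AddAut V), w ∈ K.Wgrp →
      ∀ z : Fin n → ℤ, (∀ k, 0 ≤ z k) → ρ - w (lam + ρ) = K.zsum z →
      (∑ k, z k) ≤ (M : ℤ) → ∃ v ∈ K.Wgrp, ∀ i, 0 ≤ K.pair i (v (lam + ρ)) := by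
    intro M
    induction M with
    | zero =>
      intro w hw z hz hzz hM
      by_cases hdom : ∀ i, 0 ≤ K.pair i (w (lam + ρ))
      · exact ⟨w, hw, hdom⟩
      · exfalso
        push_neg at hdom
        obtain ⟨i, hi⟩ := hdom
        have hzi : z i = 0 := by
          have h1 : (0 : ℤ) ≤ ∑ k ∈ Finset.univ.erase i, z k :=
            Finset.sum_nonneg fun k _ => hz k
          have h2 : z i + ∑ k ∈ Finset.univ.erase i, z k = ∑ k, z k :=
            Finset.add_sum_erase _ _ (Finset.mem_univ i)
          have := hz i
          omega
        -- the next reflection step makes the `i`-coordinate negative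
        set w' := K.s i * w with hw'
        have hw'W : w' ∈ K.Wgrp := mul_mem (K.s_mem i) hw
        have hstep : ρ - w' (lam + ρ)
            = K.zsum (z + fun k => if k = i then K.pair i (w (lam + ρ)) else 0) := by
          rw [hw', AddAutOld.mul_apply, K.s_apply, K.zsum_add, K.zsum_single, ← hzz]
          abel
        have hmem := K.Qprime_mem hlam hw'W
        have : -(w' (lam + ρ) - ρ) = ρ - w' (lam + ρ) := by abel
        rw [this, hstep] at hmem
        have h9 := K.coords_nonneg hmem i
        have h11 : K.pair i (w (lam + ρ)) = K.pair i (w lam) + K.pair i (w ρ) := by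
          rw [map_add, map_add]
        have h10 : (0:ℤ) ≤ z i + (K.pair i (w lam) + K.pair i (w ρ)) := by simpa using h9
        rw [h11] at hi
        omega
    | succ M ih =>
      intro w hw z hz hzz hM
      by_cases hdom : ∀ i, 0 ≤ K.pair i (w (lam + ρ))
      · exact ⟨w, hw, hdom⟩
      · push_neg at hdom
        obtain ⟨i, hi⟩ := hdom
        set w' := K.s i * w with hw'
        have hw'W : w' ∈ K.Wgrp := mul_mem (K.s_mem i) hw
        set z' := z + fun k => if k = i then K.pair i (w (lam + ρ)) else 0 with hz'def
        have hstep : ρ - w' (lam + ρ) = K.zsum z' := by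
          rw [hw', AddAutOld.mul_apply, K.s_apply, hz'def, K.zsum_add, K.zsum_single, ← hzz]
          abel
        have hmem := K.Qprime_mem hlam hw'W
        have hrw : -(w' (lam + ρ) - ρ) = ρ - w' (lam + ρ) := by abel
        rw [hrw, hstep] at hmem
        have hz'pos : ∀ k, 0 ≤ z' k := K.coords_nonneg hmem
        refine ih w' hw'W z' hz'pos hstep ?_
        have hsum : ∑ k, z' k = (∑ k, z k) + K.pair i (w (lam + ρ)) := by
          simp only [hz'def, Pi.add_apply, Finset.sum_add_distrib]
          simp
        rw [hsum]
        push_cast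
        omega
  have h1 : -lam ∈ K.QP := by
    have := K.Qprime_mem hlam (one_mem K.Wgrp)
    simpa using this
  obtain ⟨z, hz, hzz⟩ := K.mem_QP_iff.mp h1
  have hsz : (0 : ℤ) ≤ ∑ k, z k := Finset.sum_nonneg fun k _ => hz k
  refine key (∑ k, z k).toNat 1 (one_mem _) z hz ?_ ?_
  · have : (1 : AddAut V) (lam + ρ) = lam + ρ := rfl
    rw [this, ← hzz]
    abel
  · rw [Int.toNat_of_nonneg hsz]

/-- **Uniqueness of the dominant orbit element.** -/
lemma dominant_unique {ρ lam : V} (hlam : lam ∈ K.Qprime ρ)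
    {v1 v2 : AddAut V} (h1 : v1 ∈ K.Wgrp) (h2 : v2 ∈ K.Wgrp)
    (hd1 : ∀ i, 0 ≤ K.pair i (v1 (lam + ρ))) (hd2 : ∀ i, 0 ≤ K.pair i (v2 (lam + ρ))) :
    v1 (lam + ρ) = v2 (lam + ρ) := by
  set w := v2 * v1⁻¹ with hw
  have hwW : w ∈ K.Wgrp := mul_mem h2 (inv_mem h1)
  obtain ⟨l, hl⟩ := K.exists_word hwW
  have hx1 : v1 (lam + ρ) - (lam + ρ) ∈ K.QS := by
    have h0 : (lam + ρ) - (lam + ρ) ∈ K.QS := by rw [sub_self]; exact zero_mem _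
    exact K.w_sub_mem h1 h0
  have hx2 : v2 (lam + ρ) - (lam + ρ) ∈ K.QS := by
    have h0 : (lam + ρ) - (lam + ρ) ∈ K.QS := by rw [sub_self]; exact zero_mem _
    exact K.w_sub_mem h2 h0
  have hw1 : w (v1 (lam + ρ)) = v2 (lam + ρ) := by
    rw [hw, AddAutOld.mul_apply]
    congr 1
    simp
  have d1 : v1 (lam + ρ) - v2 (lam + ρ) ∈ K.QP := by
    have := K.dominant_diff hlam l.length l le_rfl (v1 (lam + ρ)) hx1 hd1
    rwa [hl, hw1] at this
  have d2 : v2 (lam + ρ) - v1 (lam + ρ) ∈ K.QP := by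
    have hl2 : K.piW l.reverse = w⁻¹ := by rw [K.piW_reverse, hl]
    have hw2 : w⁻¹ (v2 (lam + ρ)) = v1 (lam + ρ) := by
      rw [← hw1]
      simp
    have := K.dominant_diff hlam l.reverse.length l.reverse le_rfl (v2 (lam + ρ)) hx2 hd2
    rwa [hl2, hw2] at this
  have h0 : v1 (lam + ρ) - v2 (lam + ρ) = 0 := by
    refine K.QP_antisymm d1 ?_
    rwa [neg_sub]
  exact sub_eq_zero.mp h0

end KacMoody

/-- **Lemma (dominant representatives for the circle action).**
For every `λ ∈ Q' = ⋂_{w ∈ W} w∘Q⁻`, there exists a unique `μ ∈ Q⁻` such that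
`μ + ρ ∈ P⁺` and `μ = v∘λ` for some `v ∈ W`. -/
theorem unique_dominant_circle_representative
    (n : ℕ) (V : Type) [AddCommGroup V] (K : KacMoody n V)
    (ρ : V) (hρ : ∀ i, K.pair i ρ = 1) :
    ∀ lam ∈ K.Qprime ρ,
      ∃! μ : V, -μ ∈ K.QP ∧ μ + ρ ∈ K.Pplus ∧ ∃ v ∈ K.Wgrp, v (lam + ρ) - ρ = μ := by
  intro lam hlam
  obtain ⟨v, hv, hdom⟩ := K.exists_dominant hlam
  refine ⟨v (lam + ρ) - ρ, ⟨K.Qprime_mem hlam hv, ?_, v, hv, rfl⟩, ?_⟩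
  · have hre : v (lam + ρ) - ρ + ρ = v (lam + ρ) := by abel
    rw [hre]
    exact hdom
  · rintro μ' ⟨hμ'1, hμ'2, v', hv', rfl⟩
    have hd2 : ∀ i, 0 ≤ K.pair i (v' (lam + ρ)) := by
      intro i
      have hre : v' (lam + ρ) - ρ + ρ = v' (lam + ρ) := by abel
      have := hμ'2 i
      rwa [hre] at this
    rw [K.dominant_unique hlam hv' hv hd2 hdom]
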